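/- arXiv:0803.2327 — 2 statements merged into one kernel-verified Lean document; each statement's English description precedes it below -/
import Mathlib

section
/- Let X be a topological space, x₀ ∈ X, and π : X → B(Ĥ) a norm-continuous family of finite-rank orthogonal projections with constant rank r near x₀. Let p : Ĥ → F be the orthogonal projection onto F = range π(x₀). Then there is an open neighborhood W of x₀ such that for every x ∈ W, p restricts to a linear isomorphism from range π(x) onto F. -/
/-- Let `π : X → B(Ĥ)` be a norm-continuous family of finite-rank orthogonal projections
of constant rank `r` near `x₀`, and `F = range π(x₀)`. Then on a neighborhood `W` of `x₀`
the orthogonal projection `p` onto `F` (that is, `π(x₀)`) restricts to a linear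
isomorphism from `range π(x)` onto `F` for every `x ∈ W`. -/
theorem stmt18 (X : Type*) [TopologicalSpace X]
    (H : Type*) [NormedAddCommGroup H] [InnerProductSpace ℂ H] [CompleteSpace H]
    (π : X → (H →L[ℂ] H)) (hcont : Continuous π)
    (hsa : ∀ x, IsSelfAdjoint (π x)) (hidem : ∀ x, (π x) ^ 2 = π x)
    (hfin : ∀ x, FiniteDimensional ℂ (LinearMap.range (π x : H →ₗ[ℂ] H)))
    (x₀ : X) (r : ℕ)
    (hrank : ∀ᶠ x in nhds x₀, Module.finrank ℂ (LinearMap.range (π x : H →ₗ[ℂ] H)) = r) :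
    ∃ W : Set X, IsOpen W ∧ x₀ ∈ W ∧ ∀ x ∈ W,
      Function.Injective (fun v : LinearMap.range (π x : H →ₗ[ℂ] H) => (π x₀) (v : H)) ∧
      Submodule.map (π x₀ : H →ₗ[ℂ] H) (LinearMap.range (π x : H →ₗ[ℂ] H)) = LinearMap.range (π x₀ : H →ₗ[ℂ] H) := by
  obtain ⟨U, hU, hUopen, hx₀U⟩ := eventually_nhds_iff.mp hrank
  have hVopen : IsOpen {x | ‖π x - π x₀‖ < 1} :=
    isOpen_lt ((hcont.sub continuous_const).norm) continuous_const
  refine ⟨U ∩ {x | ‖π x - π x₀‖ < 1}, hUopen.inter hVopen,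
    ⟨hx₀U, by simp⟩, ?_⟩
  rintro x ⟨hxU, hxV⟩
  have hxV' : ‖π x - π x₀‖ < 1 := hxV
  have hfix : ∀ u ∈ LinearMap.range (π x : H →ₗ[ℂ] H), π x u = u := by
    rintro u ⟨y, rfl⟩
    conv_rhs => rw [← hidem x]
    simp [pow_two]
  have hker : ∀ u ∈ LinearMap.range (π x : H →ₗ[ℂ] H), π x₀ u = 0 → u = 0 := by
    intro u hu h0
    by_contra hne
    have h1 : u = (π x - π x₀) u := by
      rw [ContinuousLinearMap.sub_apply, h0, sub_zero, hfix u hu]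
    have h2 : ‖u‖ ≤ ‖π x - π x₀‖ * ‖u‖ := by
      conv_lhs => rw [h1]
      exact (π x - π x₀).le_opNorm u
    have h3 : ‖π x - π x₀‖ * ‖u‖ < 1 * ‖u‖ :=
      mul_lt_mul_of_pos_right hxV' (norm_pos_iff.mpr hne)
    rw [one_mul] at h3
    exact lt_irrefl _ (lt_of_le_of_lt h2 h3)
  have hinj : Function.Injective (fun v : LinearMap.range (π x : H →ₗ[ℂ] H) => (π x₀) (v : H)) := by
    intro v w h
    have h0 : π x₀ ((v : H) - w) = 0 := by
      rw [map_sub]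
      simp only at h
      rw [h, sub_self]
    have := hker _ (Submodule.sub_mem _ v.2 w.2) h0
    exact Subtype.ext (sub_eq_zero.mp this)
  refine ⟨hinj, ?_⟩
  set f : LinearMap.range (π x : H →ₗ[ℂ] H) →ₗ[ℂ] H :=
    (π x₀ : H →ₗ[ℂ] H).comp (LinearMap.range (π x : H →ₗ[ℂ] H)).subtype with hf
  have hfinj : Function.Injective f := fun a b h => hinj h
  have hrange : LinearMap.range f = Submodule.map (π x₀ : H →ₗ[ℂ] H) (LinearMap.range (π x : H →ₗ[ℂ] H)) := by
    rw [hf, LinearMap.range_comp, Submodule.range_subtype]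
  have hle : Submodule.map (π x₀ : H →ₗ[ℂ] H) (LinearMap.range (π x : H →ₗ[ℂ] H)) ≤ LinearMap.range (π x₀ : H →ₗ[ℂ] H) := by
    rintro _ ⟨u, hu, rfl⟩; exact ⟨u, rfl⟩
  haveI := hfin x
  haveI := hfin x₀
  have hdim1 : Module.finrank ℂ (Submodule.map (π x₀ : H →ₗ[ℂ] H) (LinearMap.range (π x : H →ₗ[ℂ] H))) = r := by
    rw [← hrange, LinearMap.finrank_range_of_inj hfinj, hU x hxU]
  have hdimF : Module.finrank ℂ (LinearMap.range (π x₀ : H →ₗ[ℂ] H)) = r := hU x₀ hx₀U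
  exact Submodule.eq_of_le_of_finrank_eq hle (hdim1.trans hdimF.symm)
end

section
/- Let H be a Hilbert space and A : X → B(H) a continuous family (operator norm) of operators with A(x)*A(x) − 1 and A(x)A(x)* − 1 compact for each x, over a topological space X. Suppose U ⊆ X is open and μ ∈ (0,1) lies in the resolvent set of Â(x)² for every x ∈ U, where Â(x) is the associated degree-1 self-adjoint operator on Ĥ = H ⊕ H. Then the function x ↦ dim (Ĥ, Â(x))_{<μ} is locally constant on U. -/
/-- The degree-1 self-adjoint operator `Â = [[0, A*],[A, 0]]` on `Ĥ = H ⊕ H` associated to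
a bounded operator `A` on `H`. -/
noncomputable def Ahat {H : Type*} [NormedAddCommGroup H] [InnerProductSpace ℂ H]
    [CompleteSpace H] (A : H →L[ℂ] H) : (H × H) →L[ℂ] (H × H) :=
  ((ContinuousLinearMap.adjoint A).comp (ContinuousLinearMap.snd ℂ H H)).prod
    (A.comp (ContinuousLinearMap.fst ℂ H H))

set_option linter.unusedSectionVars false

section Aux

variable {E : Type*} [NormedAddCommGroup E] [InnerProductSpace ℂ E] [CompleteSpace E]

lemma aux_spec_abs_le (T : E →L[ℂ] E) {r : ℝ} (h : r ∈ spectrum ℝ T) : |r| ≤ ‖T‖ := by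
  have h1 : ‖r‖ ≤ ‖T‖ * ‖(1 : E →L[ℂ] E)‖ := spectrum.norm_le_norm_mul_of_mem h
  have h2 : ‖(1 : E →L[ℂ] E)‖ ≤ 1 := ContinuousLinearMap.norm_id_le
  have h3 : (0:ℝ) ≤ ‖T‖ := norm_nonneg _
  rw [Real.norm_eq_abs] at h1
  nlinarith

lemma aux_real_spec_iff (T : E →L[ℂ] E) {l : ℝ} :
    l ∈ spectrum ℝ T ↔ (l : ℂ) ∈ spectrum ℂ T := by
  rw [spectrum.mem_iff, spectrum.mem_iff,
    IsScalarTower.algebraMap_apply ℝ ℂ (E →L[ℂ] E), Complex.coe_algebraMap]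

lemma aux_spec_real_open (T : E →L[ℂ] E) : IsOpen (spectrum ℝ T)ᶜ := by
  have hcl : IsClosed (spectrum ℝ T) := by
    have hpre : spectrum ℝ T = Complex.ofReal ⁻¹' spectrum ℂ T :=
      Set.ext fun l => aux_real_spec_iff T
    rw [hpre]
    exact (spectrum.isClosed T).preimage Complex.continuous_ofReal
  exact hcl.isOpen_compl

lemma aux_mem_spec_of_eig {T : E →L[ℂ] E} {c : ℂ} {v : E} (hv : T v = c • v) (h0 : v ≠ 0) :
    c ∈ spectrum ℂ T := by
  by_contra h
  rw [spectrum.notMem_iff] at h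
  have h1 : (algebraMap ℂ (E →L[ℂ] E) c - T) v = 0 := by
    rw [ContinuousLinearMap.sub_apply, Algebra.algebraMap_eq_smul_one,
      ContinuousLinearMap.smul_apply, ContinuousLinearMap.one_apply, hv, sub_self]
  have h2 : ((↑h.unit⁻¹ : E →L[ℂ] E) * (algebraMap ℂ (E →L[ℂ] E) c - T)) v = v := by
    rw [IsUnit.val_inv_mul, ContinuousLinearMap.one_apply]
  rw [ContinuousLinearMap.mul_apply, h1, map_zero] at h2
  exact h0 h2.symm

lemma aux_pow_apply_eig (T : E →L[ℂ] E) {r : ℝ} {v : E} (hv : T v = r • v) (n : ℕ) :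
    (T ^ n) v = r ^ n • v := by
  induction n with
  | zero => simp
  | succ n ih =>
      rw [pow_succ, ContinuousLinearMap.mul_apply, hv, ContinuousLinearMap.map_smul_of_tower,
        ih, smul_smul, mul_comm, pow_succ]

lemma aux_aeval_apply_eig (T : E →L[ℂ] E) {r : ℝ} {v : E} (hv : T v = r • v) (p : Polynomial ℝ) :
    (Polynomial.aeval T p) v = p.eval r • v := by
  rw [Polynomial.aeval_eq_sum_range, Polynomial.eval_eq_sum_range,
    ContinuousLinearMap.sum_apply, Finset.sum_smul]
  refine Finset.sum_congr rfl fun i _ => ?_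
  rw [ContinuousLinearMap.smul_apply, aux_pow_apply_eig T hv, smul_smul]

lemma aux_spec_Icc (T : E →L[ℂ] E) {t : ℝ} (ht : t ∈ spectrum ℝ T) :
    t ∈ Set.Icc (-(‖T‖ + 1)) (‖T‖ + 1) := by
  have := abs_le.mp (aux_spec_abs_le T ht)
  constructor <;> [linarith [this.1]; linarith [this.2]]

lemma aux_cfc_apply_eig {T : E →L[ℂ] E} (hT : IsSelfAdjoint T) {f : ℝ → ℝ} (hf : Continuous f)
    {r : ℝ} {v : E} (hv : T v = r • v) (hr : r ∈ spectrum ℝ T) :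
    cfc f T v = f r • v := by
  set M : ℝ := ‖T‖ + 1 with hM
  have key : ∀ δ : ℝ, 0 < δ → ‖cfc f T v - f r • v‖ ≤ 0 + δ := by
    intro δ hδ
    set η : ℝ := δ / (2 * ‖v‖ + 1) with hη
    have hη0 : 0 < η := by positivity
    obtain ⟨p, hp⟩ := exists_polynomial_near_of_continuousOn (-M) M f hf.continuousOn η hη0
    have hbound : ∀ t ∈ spectrum ℝ T, ‖f t - p.eval t‖ ≤ η := fun t ht => by
      rw [Real.norm_eq_abs, abs_sub_comm]
      exact (hp t (aux_spec_Icc T ht)).le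
    have hnorm : ‖cfc f T - Polynomial.aeval T p‖ ≤ η := by
      rw [← cfc_polynomial p T hT,
        ← cfc_sub f p.eval T hf.continuousOn p.continuous.continuousOn]
      exact norm_cfc_le hη0.le hbound
    have heval : (Polynomial.aeval T p) v = p.eval r • v := aux_aeval_apply_eig T hv p
    have h1 : ‖cfc f T v - f r • v‖
        ≤ ‖(cfc f T - Polynomial.aeval T p) v‖ + ‖p.eval r • v - f r • v‖ := by
      rw [ContinuousLinearMap.sub_apply, heval]
      have := norm_sub_le_norm_sub_add_norm_sub (cfc f T v) (p.eval r • v) (f r • v)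
      linarith [this]
    have h2 : ‖(cfc f T - Polynomial.aeval T p) v‖ ≤ η * ‖v‖ :=
      ((cfc f T - Polynomial.aeval T p).le_opNorm v).trans
        (mul_le_mul_of_nonneg_right hnorm (norm_nonneg v))
    have h3 : ‖p.eval r • v - f r • v‖ ≤ η * ‖v‖ := by
      rw [← sub_smul, norm_smul, Real.norm_eq_abs, abs_sub_comm]
      have hr' : |f r - p.eval r| ≤ η := by
        have := hp r (aux_spec_Icc T hr); rw [abs_sub_comm] at this; exact this.le
      exact mul_le_mul_of_nonneg_right hr' (norm_nonneg v)
    have hfinal : η * ‖v‖ + η * ‖v‖ ≤ δ := by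
      have hv0 : (0:ℝ) ≤ ‖v‖ := norm_nonneg v
      have : η * (2 * ‖v‖ + 1) = δ := by rw [hη]; exact div_mul_cancel₀ δ (by positivity)
      nlinarith
    linarith
  have := le_of_forall_pos_le_add key
  rw [sub_eq_zero.mp (norm_le_zero_iff.mp this)]

end Aux
section Aux2
variable {E : Type*} [NormedAddCommGroup E] [InnerProductSpace ℂ E] [CompleteSpace E]

lemma aux_gap_stable {S T : E →L[ℂ] E} (hS : IsSelfAdjoint S) {ν d : ℝ} (hd : 0 < d)
    (hgap : ∀ t ∈ spectrum ℝ S, d ≤ |ν - t|) (hST : ‖T - S‖ < d) :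
    ν ∉ spectrum ℝ T := by
  have hg : ContinuousOn (fun t : ℝ => (ν - t)⁻¹) (spectrum ℝ S) := by
    refine ContinuousOn.inv₀ (by fun_prop) fun t ht => ?_
    have := hgap t ht
    intro h
    rw [h] at this
    simp at this
    linarith
  set R : E →L[ℂ] E := cfc (fun t : ℝ => (ν - t)⁻¹) S with hR
  have hcfc_nuS : algebraMap ℝ (E →L[ℂ] E) ν - S = cfc (fun t : ℝ => ν - t) S := by
    rw [cfc_sub (fun _ => ν) (fun t => t) S (by fun_prop) (by fun_prop), cfc_const ν S hS,
      cfc_id' ℝ S hS]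
  have h1 : R * (algebraMap ℝ (E →L[ℂ] E) ν - S) = 1 := by
    rw [hcfc_nuS, hR, ← cfc_mul _ _ S hg (by fun_prop)]
    have : cfc (fun t : ℝ => (ν - t)⁻¹ * (ν - t)) S = cfc (fun _ : ℝ => (1:ℝ)) S := by
      refine cfc_congr fun t ht => ?_
      refine inv_mul_cancel₀ fun h => ?_
      have := hgap t ht; rw [h] at this; simp at this; linarith
    rw [this, cfc_const 1 S hS, map_one]
  have h2 : (algebraMap ℝ (E →L[ℂ] E) ν - S) * R = 1 := by
    rw [hcfc_nuS, hR, ← cfc_mul _ _ S (by fun_prop) hg]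
    have : cfc (fun t : ℝ => (ν - t) * (ν - t)⁻¹) S = cfc (fun _ : ℝ => (1:ℝ)) S := by
      refine cfc_congr fun t ht => ?_
      refine mul_inv_cancel₀ fun h => ?_
      have := hgap t ht; rw [h] at this; simp at this; linarith
    rw [this, cfc_const 1 S hS, map_one]
  have hRnorm : ‖R‖ ≤ d⁻¹ := by
    refine norm_cfc_le (by positivity) fun t ht => ?_
    rw [Real.norm_eq_abs, abs_inv]
    exact inv_anti₀ hd (hgap t ht)
  have hU2 : IsUnit (1 - R * (T - S)) := by
    refine (Units.oneSub _ ?_).isUnit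
    calc ‖R * (T - S)‖ ≤ ‖R‖ * ‖T - S‖ := norm_mul_le _ _
      _ ≤ d⁻¹ * ‖T - S‖ := by gcongr
      _ < d⁻¹ * d := by
          have : (0:ℝ) < d⁻¹ := by positivity
          exact mul_lt_mul_of_pos_left hST this
      _ = 1 := inv_mul_cancel₀ hd.ne'
  have hU1 : IsUnit (algebraMap ℝ (E →L[ℂ] E) ν - S) :=
    ⟨⟨algebraMap ℝ (E →L[ℂ] E) ν - S, R, h2, h1⟩, rfl⟩
  have key : algebraMap ℝ (E →L[ℂ] E) ν - T
      = (algebraMap ℝ (E →L[ℂ] E) ν - S) * (1 - R * (T - S)) := by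
    rw [mul_sub, mul_one, ← mul_assoc, h2, one_mul]; abel
  rw [spectrum.notMem_iff, key]
  exact hU1.mul hU2
end Aux2
section Aux3
variable {E : Type*} [NormedAddCommGroup E] [InnerProductSpace ℂ E] [CompleteSpace E]

lemma aux_cfc_compact {T : E →L[ℂ] E} (hT : IsSelfAdjoint T)
    (hK : IsCompactOperator ((T - 1 : E →L[ℂ] E) : E → E))
    {f : ℝ → ℝ} (hf : Continuous f) (hf1 : f 1 = 0) :
    IsCompactOperator ((cfc f T : E →L[ℂ] E) : E → E) := by
  set M : ℝ := ‖T‖ + 1 with hM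
  have hMmem : (1:ℝ) ∈ Set.Icc (-M) M := by
    constructor <;> [nlinarith [norm_nonneg T]; nlinarith [norm_nonneg T]]
  have hclosure : cfc f T ∈ closure {G : E →L[ℂ] E | IsCompactOperator (G : E → E)} := by
    rw [Metric.mem_closure_iff]
    intro ε hε
    obtain ⟨p, hp⟩ := exists_polynomial_near_of_continuousOn (-M) M f hf.continuousOn
      (ε/3) (by positivity)
    set q : Polynomial ℝ := p - Polynomial.C (p.eval 1) with hq
    have hq1 : q.IsRoot 1 := by simp [hq, Polynomial.IsRoot]
    obtain ⟨s, hs⟩ := (Polynomial.dvd_iff_isRoot).mpr hq1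
    refine ⟨Polynomial.aeval T q, ?_, ?_⟩
    · -- compactness of aeval T q = (T-1) * aeval T s
      have : Polynomial.aeval T q = (T - 1) * Polynomial.aeval T s := by
        rw [hs, map_mul]
        congr 1
        rw [map_sub, Polynomial.aeval_X, Polynomial.aeval_C, map_one]
      rw [Set.mem_setOf_eq, this]
      have h1 : IsCompactOperator (((T - 1 : E →L[ℂ] E)) ∘ (Polynomial.aeval T s : E →L[ℂ] E)) :=
        hK.comp_clm _
      have : (((T - 1) * Polynomial.aeval T s : E →L[ℂ] E) : E → E)
          = ((T - 1 : E →L[ℂ] E) : E → E) ∘ (Polynomial.aeval T s : E →L[ℂ] E) := rfl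
      rw [this]
      exact h1
    · rw [dist_eq_norm, ← cfc_polynomial q T hT,
        ← cfc_sub f q.eval T hf.continuousOn q.continuous.continuousOn]
      have hb : ∀ t ∈ spectrum ℝ T, ‖f t - q.eval t‖ ≤ 2*ε/3 := by
        intro t ht
        have h1 := hp t (aux_spec_Icc T ht)
        have h2 := hp 1 hMmem
        rw [hf1] at h2
        simp only [hq, Polynomial.eval_sub, Polynomial.eval_C]
        rw [Real.norm_eq_abs]
        have h0 : f t - (p.eval t - p.eval 1) = -(p.eval t - f t) + p.eval 1 := by ring
        rw [h0]
        have h3 : |(-(p.eval t - f t)) + p.eval 1| ≤ |p.eval t - f t| + |p.eval 1| := by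
          have := abs_add_le (-(p.eval t - f t)) (p.eval 1)
          rwa [abs_neg] at this
        rw [sub_zero] at h2
        linarith
      have := norm_cfc_le (by positivity) hb
      calc ‖cfc (fun t => f t - q.eval t) T‖ ≤ 2*ε/3 := this
        _ < ε := by linarith
  exact isClosed_setOf_isCompactOperator.closure_subset hclosure
end Aux3
section Aux4
variable {E : Type*} [NormedAddCommGroup E] [InnerProductSpace ℂ E] [CompleteSpace E]

lemma aux_mem_range_iff {P : E →L[ℂ] E} (hP : ∀ v, P (P v) = P v) {v : E} :
    v ∈ LinearMap.range (P : E →ₗ[ℂ] E) ↔ P v = v := by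
  constructor
  · rintro ⟨u, rfl⟩
    exact hP u
  · intro h
    exact ⟨v, h⟩

lemma aux_findim_range {P : E →L[ℂ] E} (hP : ∀ v, P (P v) = P v)
    (hc : IsCompactOperator (P : E → E)) :
    FiniteDimensional ℂ (LinearMap.range (P : E →ₗ[ℂ] E)) := by
  set W : Submodule ℂ E := LinearMap.range (P : E →ₗ[ℂ] E) with hW
  have hWset : (W : Set E) = {v : E | P v = v} := by
    ext v; exact aux_mem_range_iff hP
  have hWclosed : IsClosed (W : Set E) := by
    rw [hWset]
    exact isClosed_eq P.continuous continuous_id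
  have hc' : IsCompactOperator (((P : E →ₗ[ℂ] E)) : E → E) := by
    rwa [ContinuousLinearMap.coe_coe]
  have hC : IsCompact (closure (((P : E →ₗ[ℂ] E)) '' Metric.closedBall 0 1)) :=
    hc'.isCompact_closure_image_closedBall (𝕜₁ := ℂ) 1
  set S : Set E := (W : Set E) ∩ Metric.closedBall 0 1 with hS
  have hSsub : S ⊆ closure ((P : E → E) '' Metric.closedBall 0 1) := by
    rintro v ⟨hv1, hv2⟩
    exact subset_closure ⟨v, hv2, by simpa using (aux_mem_range_iff hP).mp hv1⟩
  have hSclosed : IsClosed S := hWclosed.inter Metric.isClosed_closedBall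
  have hScompact : IsCompact S := hC.of_isClosed_subset hSclosed hSsub
  have hball : (Subtype.val : W → E) '' Metric.closedBall 0 1 = S := by
    ext v
    constructor
    · rintro ⟨⟨u, hu⟩, hmem, rfl⟩
      refine ⟨hu, ?_⟩
      simpa [Metric.mem_closedBall, dist_eq_norm] using hmem
    · rintro ⟨hv1, hv2⟩
      refine ⟨⟨v, hv1⟩, ?_, rfl⟩
      simpa [Metric.mem_closedBall, dist_eq_norm] using hv2
  have hcb : IsCompact (Metric.closedBall (0 : W) 1) := by
    rw [Topology.IsEmbedding.isCompact_iff (Topology.IsEmbedding.subtypeVal)]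
    rw [hball]
    exact hScompact
  exact FiniteDimensional.of_isCompact_closedBall₀ (𝕜 := ℂ) one_pos hcb

lemma aux_finrank_le {P Q : E →L[ℂ] E} (hP : ∀ v, P (P v) = P v) (hQ : ∀ v, Q (Q v) = Q v)
    (hfQ : FiniteDimensional ℂ (LinearMap.range (Q : E →ₗ[ℂ] E)))
    (hPQ : ‖P - Q‖ < 1) :
    Module.finrank ℂ (LinearMap.range (P : E →ₗ[ℂ] E))
      ≤ Module.finrank ℂ (LinearMap.range (Q : E →ₗ[ℂ] E)) := by
  set WP := LinearMap.range (P : E →ₗ[ℂ] E)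
  set WQ := LinearMap.range (Q : E →ₗ[ℂ] E)
  have hmem : ∀ u : WP, Q (u : E) ∈ WQ := fun u => ⟨(u : E), rfl⟩
  set φ : WP →ₗ[ℂ] WQ :=
    LinearMap.codRestrict WQ ((Q : E →ₗ[ℂ] E).comp WP.subtype) hmem with hφ
  have hinj : Function.Injective φ := by
    rw [← LinearMap.ker_eq_bot, LinearMap.ker_eq_bot']
    intro u hu
    have hQu : Q (u : E) = 0 := by
      have := congrArg (Subtype.val) hu
      exact this
    have hPu : P (u : E) = (u : E) := (aux_mem_range_iff hP).mp u.2
    have h1 : ‖(u : E)‖ = ‖(P - Q) (u : E)‖ := by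
      rw [ContinuousLinearMap.sub_apply, hQu, sub_zero, hPu]
    have h2 : ‖(P - Q) (u : E)‖ ≤ ‖P - Q‖ * ‖(u : E)‖ := (P - Q).le_opNorm _
    have h3 : ‖(u : E)‖ ≤ ‖P - Q‖ * ‖(u : E)‖ := h1.le.trans h2
    have h4 : (u : E) = 0 := by
      by_contra h
      have h5 : 0 < ‖(u : E)‖ := norm_pos_iff.mpr h
      nlinarith
    exact Subtype.ext h4
  exact LinearMap.finrank_le_finrank_of_injective hinj

lemma aux_finrank_eq {P Q : E →L[ℂ] E} (hP : ∀ v, P (P v) = P v) (hQ : ∀ v, Q (Q v) = Q v)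
    (hfP : FiniteDimensional ℂ (LinearMap.range (P : E →ₗ[ℂ] E)))
    (hfQ : FiniteDimensional ℂ (LinearMap.range (Q : E →ₗ[ℂ] E)))
    (hPQ : ‖P - Q‖ < 1) :
    Module.finrank ℂ (LinearMap.range (P : E →ₗ[ℂ] E))
      = Module.finrank ℂ (LinearMap.range (Q : E →ₗ[ℂ] E)) := by
  refine le_antisymm (aux_finrank_le hP hQ hfQ hPQ) (aux_finrank_le hQ hP hfP ?_)
  rwa [norm_sub_rev]
end Aux4
set_option maxHeartbeats 1600000
set_option synthInstance.maxHeartbeats 400000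

noncomputable def auxBump (μ ε : ℝ) (t : ℝ) : ℝ := max 0 (min 1 ((μ + ε - t) / ε))

lemma auxBump_continuous (μ ε : ℝ) : Continuous (auxBump μ ε) := by
  unfold auxBump; fun_prop

lemma auxBump_eq_one {μ ε t : ℝ} (hε : 0 < ε) (h : t ≤ μ) : auxBump μ ε t = 1 := by
  unfold auxBump
  have h1 : (1:ℝ) ≤ (μ + ε - t) / ε := by
    rw [le_div_iff₀ hε]; linarith
  rw [min_eq_left h1, max_eq_right zero_le_one]

lemma auxBump_eq_zero {μ ε t : ℝ} (hε : 0 < ε) (h : μ + ε ≤ t) : auxBump μ ε t = 0 := by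
  unfold auxBump
  have h1 : (μ + ε - t) / ε ≤ 0 := div_nonpos_of_nonpos_of_nonneg (by linarith) hε.le
  rw [min_eq_right (h1.trans zero_le_one), max_eq_left h1]

lemma auxBump_lt_one {μ ε t : ℝ} (hε : 0 < ε) (h : μ < t) : auxBump μ ε t < 1 := by
  unfold auxBump
  have h1 : (μ + ε - t) / ε < 1 := by rw [div_lt_iff₀ hε]; linarith
  rw [max_lt_iff]
  exact ⟨one_pos, lt_of_le_of_lt (min_le_right _ _) h1⟩

lemma auxBump_mul_self {μ ε t : ℝ} (hε : 0 < ε) (h : t ∉ Set.Icc μ (μ + ε)) :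
    auxBump μ ε t * auxBump μ ε t = auxBump μ ε t := by
  rw [Set.mem_Icc, not_and_or] at h
  rcases h with h | h
  · rw [auxBump_eq_one hε (by push_neg at h; exact h.le)]; ring
  · rw [auxBump_eq_zero hε (by push_neg at h; exact h.le)]; ring

section Core
variable {E : Type*} [NormedAddCommGroup E] [InnerProductSpace ℂ E] [CompleteSpace E]

lemma aux_idem {T : E →L[ℂ] E} (hT : IsSelfAdjoint T) {μ ε : ℝ} (hε : 0 < ε)
    (hgap : ∀ ν ∈ Set.Icc μ (μ + ε), ν ∉ spectrum ℝ T) :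
    ∀ v, cfc (auxBump μ ε) T (cfc (auxBump μ ε) T v) = cfc (auxBump μ ε) T v := by
  have hmul : cfc (auxBump μ ε) T * cfc (auxBump μ ε) T = cfc (auxBump μ ε) T := by
    rw [← cfc_mul _ _ T (auxBump_continuous μ ε).continuousOn (auxBump_continuous μ ε).continuousOn]
    refine cfc_congr fun t ht => ?_
    exact auxBump_mul_self hε (fun hmem => hgap t hmem ht)
  intro v
  conv_rhs => rw [← hmul]
  rfl

lemma aux_smul_real (l : ℝ) (v : E) : (l : ℂ) • v = l • v := by
  rw [← algebraMap_smul ℂ l v, Complex.coe_algebraMap]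

lemma aux_eigensup_eq_range {T : E →L[ℂ] E} (hT : IsSelfAdjoint T) {μ ε : ℝ} (hε : 0 < ε)
    (hgap : ∀ ν ∈ Set.Icc μ (μ + ε), ν ∉ spectrum ℝ T)
    (hfin : FiniteDimensional ℂ (LinearMap.range ((cfc (auxBump μ ε) T : E →L[ℂ] E) : E →ₗ[ℂ] E))) :
    (⨆ l : {l : ℝ // l < μ},
        Module.End.eigenspace ((T : E →L[ℂ] E) : E →ₗ[ℂ] E) (l : ℂ))
      = LinearMap.range ((cfc (auxBump μ ε) T : E →L[ℂ] E) : E →ₗ[ℂ] E) := by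
  set f := auxBump μ ε with hf
  set P : E →L[ℂ] E := cfc f T with hP
  have hPidem : ∀ v, P (P v) = P v := aux_idem hT hε hgap
  set W : Submodule ℂ E := LinearMap.range ((P : E →L[ℂ] E) : E →ₗ[ℂ] E) with hW
  apply le_antisymm
  · -- each eigenspace with l < μ is inside range P
    refine iSup_le fun l => ?_
    intro v hv
    rw [Module.End.mem_eigenspace_iff] at hv
    have hv' : T v = (l : ℝ) • v := by
      rw [show (T : E →ₗ[ℂ] E) v = T v from rfl] at hv
      rw [hv, aux_smul_real]
    by_cases h0 : v = 0
    · simp [h0]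
    · have hspec : (l : ℝ) ∈ spectrum ℝ T := by
        rw [aux_real_spec_iff]
        exact aux_mem_spec_of_eig (by rw [hv'] ; rw [aux_smul_real]) h0
      have := aux_cfc_apply_eig hT (auxBump_continuous μ ε) hv' hspec
      have h1 : P v = v := by
        rw [hP, this, auxBump_eq_one hε l.2.le, one_smul]
      exact ⟨v, h1⟩
  · -- range P inside the sup of eigenspaces
    rintro v ⟨u, rfl⟩
    set w := P u with hw
    have hwW : ∀ z, P z ∈ W := fun z => ⟨z, rfl⟩
    -- T-invariance of W
    have hcomm : T * P = P * T := by
      have hid : cfc (fun t : ℝ => t) T = T := cfc_id' ℝ T hT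
      calc T * P = cfc (fun t : ℝ => t) T * cfc f T := by rw [hid]
        _ = cfc (fun t : ℝ => t * f t) T := by
            rw [← cfc_mul _ _ T (by fun_prop) (auxBump_continuous μ ε).continuousOn]
        _ = cfc (fun t : ℝ => f t * t) T := cfc_congr fun t _ => mul_comm _ _
        _ = cfc f T * cfc (fun t : ℝ => t) T := by
            rw [← cfc_mul _ _ T (auxBump_continuous μ ε).continuousOn (by fun_prop)]
        _ = P * T := by rw [hid]
    have hinv : ∀ z ∈ W, (T : E →ₗ[ℂ] E) z ∈ W := by
      rintro z ⟨y, rfl⟩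
      refine ⟨T y, ?_⟩
      have := congrArg (fun G : E →L[ℂ] E => G y) hcomm
      simpa using this.symm
    haveI : FiniteDimensional ℂ W := hfin
    set Tres : W →ₗ[ℂ] W := ((T : E →ₗ[ℂ] E)).restrict hinv with hTres
    have hsymm : Tres.IsSymmetric := by
      intro a b
      have hTs : ((T : E →ₗ[ℂ] E)).IsSymmetric := hT.isSymmetric
      exact hTs a b
    have hsup : (⨆ c : ℂ, Module.End.eigenspace Tres c) = ⊤ := by
      have := hsymm.orthogonalComplement_iSup_eigenspaces_eq_bot
      rwa [Submodule.orthogonal_eq_bot_iff] at this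
    have hmaple : ∀ c : ℂ, (Module.End.eigenspace Tres c).map W.subtype
        ≤ ⨆ l : {l : ℝ // l < μ},
            Module.End.eigenspace ((T : E →L[ℂ] E) : E →ₗ[ℂ] E) (l : ℂ) := by
      intro c
      intro x hx
      obtain ⟨⟨x', hx'W⟩, hx'eig, rfl⟩ := Submodule.mem_map.mp hx
      replace hx'eig := Module.End.mem_eigenspace_iff.mp hx'eig
      by_cases h0 : x' = 0
      · simp only [Submodule.coe_subtype]
        rw [h0]
        exact Submodule.zero_mem _
      have hTx' : T x' = c • x' := by
        have := congrArg (Subtype.val) hx'eig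
        simpa [hTres, LinearMap.restrict_apply] using this
      have hcspec : c ∈ spectrum ℂ T := aux_mem_spec_of_eig hTx' h0
      have hcre : c = (c.re : ℂ) := hT.mem_spectrum_eq_re hcspec
      set l : ℝ := c.re with hl
      have hlspec : l ∈ spectrum ℝ T := by
        rw [aux_real_spec_iff, ← hcre]; exact hcspec
      have hTx'' : T x' = (l : ℝ) • x' := by rw [hTx', hcre, aux_smul_real]
      have hPx' : P x' = f l • x' := aux_cfc_apply_eig hT (auxBump_continuous μ ε) hTx'' hlspec
      have hx'P : P x' = x' := by
        obtain ⟨y, hy⟩ := hx'W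
        have hy' : P y = x' := hy
        rw [← hy', hPidem]
      have hfl : f l = 1 := by
        by_contra h
        have : (f l - 1) • x' = 0 := by
          rw [sub_smul, one_smul, hPx'.symm.trans hx'P, sub_self]
        rcases smul_eq_zero.mp this with h1 | h1
        · exact h (by linarith [sub_eq_zero.mp h1])
        · exact h0 h1
      have hlmu : l < μ := by
        by_contra h
        push_neg at h
        rcases eq_or_lt_of_le h with h1 | h1
        · exact hgap μ ⟨le_refl _, by linarith⟩ (h1 ▸ hlspec)
        · have := auxBump_lt_one hε h1
          rw [hf] at hfl
          linarith
      have : x' ∈ Module.End.eigenspace ((T : E →L[ℂ] E) : E →ₗ[ℂ] E) ((l : ℝ) : ℂ) := by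
        rw [Module.End.mem_eigenspace_iff]
        show T x' = _
        rw [hTx'', aux_smul_real]
      exact le_iSup (fun l : {l : ℝ // l < μ} =>
        Module.End.eigenspace ((T : E →L[ℂ] E) : E →ₗ[ℂ] E) ((l : ℝ) : ℂ)) ⟨l, hlmu⟩ this
    have hwmem : (⟨w, hwW u⟩ : W) ∈ (⨆ c : ℂ, Module.End.eigenspace Tres c) := by
      rw [hsup]; trivial
    have : w ∈ (⨆ c : ℂ, Module.End.eigenspace Tres c).map W.subtype :=
      ⟨⟨w, hwW u⟩, hwmem, rfl⟩
    rw [Submodule.map_iSup] at this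
    exact (iSup_le hmaple : _ ≤ _) this
end Core
set_option maxHeartbeats 1000000

section Conj
variable {E F : Type*} [NormedAddCommGroup E] [NormedSpace ℂ E]
  [NormedAddCommGroup F] [NormedSpace ℂ F]

/-- Conjugation by a continuous linear equivalence, as an algebra equivalence. -/
noncomputable def auxConj (g : F ≃L[ℂ] E) : (F →L[ℂ] F) ≃ₐ[ℂ] (E →L[ℂ] E) where
  toFun G := (g.toContinuousLinearMap.comp G).comp g.symm.toContinuousLinearMap
  invFun G := (g.symm.toContinuousLinearMap.comp G).comp g.toContinuousLinearMap
  left_inv G := by ext u; simp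
  right_inv G := by ext u; simp
  map_add' G₁ G₂ := by ext u; simp
  map_mul' G₁ G₂ := by
    ext u
    simp [ContinuousLinearMap.mul_apply]
  commutes' c := by
    ext u
    simp [Algebra.algebraMap_eq_smul_one]

lemma auxConj_apply (g : F ≃L[ℂ] E) (G : F →L[ℂ] F) (u : E) :
    auxConj g G u = g (G (g.symm u)) := rfl

lemma aux_spectrum_conj (g : F ≃L[ℂ] E) (G : F →L[ℂ] F) :
    spectrum ℂ ((g.toContinuousLinearMap.comp G).comp g.symm.toContinuousLinearMap)
      = spectrum ℂ G :=
  AlgEquiv.spectrum_eq (auxConj g) G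

lemma aux_eig_conj (g : F ≃L[ℂ] E) (G : F →L[ℂ] F) (c : ℂ) :
    (Module.End.eigenspace ((G : F →L[ℂ] F) : F →ₗ[ℂ] F) c).map
        (g.toLinearEquiv : F →ₗ[ℂ] E)
      = Module.End.eigenspace
          ((((g.toContinuousLinearMap.comp G).comp g.symm.toContinuousLinearMap) :
            E →L[ℂ] E) : E →ₗ[ℂ] E) c := by
  apply le_antisymm
  · intro u hu
    obtain ⟨w, hw, rfl⟩ := Submodule.mem_map.mp hu
    replace hw := Module.End.mem_eigenspace_iff.mp hw
    rw [Module.End.mem_eigenspace_iff]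
    show g (G (g.symm (g w))) = c • (g.toLinearEquiv w)
    rw [g.symm_apply_apply]
    show g (G w) = c • g w
    rw [show (G : F →ₗ[ℂ] F) w = G w from rfl] at hw
    rw [hw, map_smul]
  · intro u hu
    replace hu := Module.End.mem_eigenspace_iff.mp hu
    refine Submodule.mem_map.mpr ⟨g.symm u, ?_, by simp⟩
    rw [Module.End.mem_eigenspace_iff]
    show G (g.symm u) = c • g.symm u
    have hu' : g (G (g.symm u)) = c • u := hu
    have := congrArg g.symm hu'
    rw [g.symm_apply_apply, map_smul] at this
    exact this
end Conj
set_option maxHeartbeats 1000000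
set_option synthInstance.maxHeartbeats 400000

section AhatFacts
open ContinuousLinearMap
variable {H : Type*} [NormedAddCommGroup H] [InnerProductSpace ℂ H] [CompleteSpace H]

lemma aux_Ahat_apply (A : H →L[ℂ] H) (u : H × H) :
    Ahat A u = ((ContinuousLinearMap.adjoint A) u.2, A u.1) := rfl

lemma aux_Ahat_eq (A : H →L[ℂ] H) :
    Ahat A = (inl ℂ H H).comp ((ContinuousLinearMap.adjoint A).comp (snd ℂ H H))
      + (inr ℂ H H).comp (A.comp (fst ℂ H H)) := by
  refine ContinuousLinearMap.ext fun u => ?_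
  simp [aux_Ahat_apply]

lemma aux_Ahat_cont {X : Type*} [TopologicalSpace X] {A : X → H →L[ℂ] H}
    (hcont : Continuous A) : Continuous fun x => Ahat (A x) := by
  have hadj : Continuous fun x => ContinuousLinearMap.adjoint (A x) :=
    (ContinuousLinearMap.adjoint : (H →L[ℂ] H) ≃ₗᵢ⋆[ℂ] (H →L[ℂ] H)).continuous.comp hcont
  have h1 : Continuous fun x =>
      (inl ℂ H H).comp ((ContinuousLinearMap.adjoint (A x)).comp (snd ℂ H H)) :=
    continuous_const.clm_comp (hadj.clm_comp continuous_const)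
  have h2 : Continuous fun x => (inr ℂ H H).comp ((A x).comp (fst ℂ H H)) :=
    continuous_const.clm_comp (hcont.clm_comp continuous_const)
  exact (h1.add h2).congr fun x => (aux_Ahat_eq (A x)).symm

lemma aux_Ahat_sq_sub_one_compact (A : H →L[ℂ] H)
    (h₁ : IsCompactOperator
      ((ContinuousLinearMap.adjoint A) * A - 1 : H →L[ℂ] H))
    (h₂ : IsCompactOperator
      (A * (ContinuousLinearMap.adjoint A) - 1 : H →L[ℂ] H)) :
    IsCompactOperator (((Ahat A) ^ 2 - 1 : (H × H) →L[ℂ] (H × H)) : (H × H) → (H × H)) := by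
  set K₁ : H →L[ℂ] H := (ContinuousLinearMap.adjoint A) * A - 1
  set K₂ : H →L[ℂ] H := A * (ContinuousLinearMap.adjoint A) - 1
  have c₁ : IsCompactOperator (((inl ℂ H H).comp (K₁.comp (fst ℂ H H))) : (H × H) → (H × H)) := by
    have := (h₁.comp_clm (fst ℂ H H)).clm_comp (inl ℂ H H)
    exact this
  have c₂ : IsCompactOperator (((inr ℂ H H).comp (K₂.comp (snd ℂ H H))) : (H × H) → (H × H)) := by
    have := (h₂.comp_clm (snd ℂ H H)).clm_comp (inr ℂ H H)
    exact this
  have key : (((Ahat A) ^ 2 - 1 : (H × H) →L[ℂ] (H × H)) : (H × H) → (H × H))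
      = fun u => ((inl ℂ H H).comp (K₁.comp (fst ℂ H H))) u
        + ((inr ℂ H H).comp (K₂.comp (snd ℂ H H))) u := by
    funext u
    have hsq : ((Ahat A) ^ 2) u = Ahat A (Ahat A u) := by
      rw [sq, ContinuousLinearMap.mul_apply]
    simp only [ContinuousLinearMap.sub_apply, ContinuousLinearMap.one_apply, hsq,
      aux_Ahat_apply, ContinuousLinearMap.comp_apply, coe_fst', coe_snd',
      inl_apply, inr_apply, ContinuousLinearMap.mul_apply, K₁, K₂,
      ContinuousLinearMap.sub_apply, ContinuousLinearMap.one_apply]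
    ext <;> simp
  rw [key]
  exact c₁.add c₂
end AhatFacts

set_option maxHeartbeats 1600000 in
set_option synthInstance.maxHeartbeats 400000 in
/-- Let `A : X → B(H)` be a norm-continuous family with `A(x)*A(x) − 1` and
`A(x)A(x)* − 1` compact, `U ⊆ X` open, and `μ ∈ (0,1)` in the resolvent set of `Â(x)²`
for all `x ∈ U`. Then `x ↦ dim (Ĥ, Â(x))_{<μ}` is locally constant on `U`. -/
theorem stmt19 (X : Type*) [TopologicalSpace X]
    (H : Type*) [NormedAddCommGroup H] [InnerProductSpace ℂ H] [CompleteSpace H]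
    (A : X → (H →L[ℂ] H)) (hcont : Continuous A)
    (hcpt₁ : ∀ x, IsCompactOperator
      ((ContinuousLinearMap.adjoint (A x)) * (A x) - 1 : H →L[ℂ] H))
    (hcpt₂ : ∀ x, IsCompactOperator
      ((A x) * (ContinuousLinearMap.adjoint (A x)) - 1 : H →L[ℂ] H))
    (U : Set X) (hU : IsOpen U)
    (μ : ℝ) (hμ0 : 0 < μ) (hμ1 : μ < 1)
    (hres : ∀ x ∈ U, (μ : ℂ) ∉ spectrum ℂ ((Ahat (A x)) ^ 2)) :
    ∀ x₀ ∈ U, ∃ V : Set X, IsOpen V ∧ x₀ ∈ V ∧ V ⊆ U ∧ ∀ x ∈ V,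
      Module.finrank ℂ
          ↥(⨆ l : {l : ℝ // l < μ},
              Module.End.eigenspace
                (((Ahat (A x)) ^ 2 : (H × H) →L[ℂ] (H × H)) : (H × H) →ₗ[ℂ] (H × H))
                (l : ℂ)) =
        Module.finrank ℂ
          ↥(⨆ l : {l : ℝ // l < μ},
              Module.End.eigenspace
                (((Ahat (A x₀)) ^ 2 : (H × H) →L[ℂ] (H × H)) : (H × H) →ₗ[ℂ] (H × H))
                (l : ℂ)) := by
  intro x₀ hx₀
  classical
  set e : WithLp 2 (H × H) ≃L[ℂ] H × H := WithLp.prodContinuousLinearEquiv 2 ℂ H H with he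
  set g : (H × H) ≃L[ℂ] WithLp 2 (H × H) := e.symm with hg
  set B : X → (WithLp 2 (H × H) →L[ℂ] WithLp 2 (H × H)) := fun x =>
    (g.toContinuousLinearMap.comp (Ahat (A x))).comp g.symm.toContinuousLinearMap with hB
  set T : X → (WithLp 2 (H × H) →L[ℂ] WithLp 2 (H × H)) := fun x => B x * B x with hT
  -- (1) conjugation formula
  have hTconj : ∀ x, T x
      = (g.toContinuousLinearMap.comp ((Ahat (A x)) ^ 2)).comp g.symm.toContinuousLinearMap := by
    intro x
    refine ContinuousLinearMap.ext fun u => ?_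
    show B x (B x u) = g (((Ahat (A x)) ^ 2) (g.symm u))
    have h2 : ((Ahat (A x)) ^ 2) (g.symm u) = Ahat (A x) (Ahat (A x) (g.symm u)) := by
      rw [sq, ContinuousLinearMap.mul_apply]
    rw [h2]
    show g (Ahat (A x) (g.symm (g (Ahat (A x) (g.symm u))))) = _
    rw [g.symm_apply_apply]
  -- (2) selfadjointness
  have hBsa : ∀ x, IsSelfAdjoint (B x) := by
    intro x
    rw [ContinuousLinearMap.isSelfAdjoint_iff_isSymmetric]
    intro u w
    show @inner ℂ _ _ (g (Ahat (A x) (g.symm u))) w = @inner ℂ _ _ u (g (Ahat (A x) (g.symm w)))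
    rw [WithLp.prod_inner_apply, WithLp.prod_inner_apply]
    have hgsu : ∀ z : WithLp 2 (H × H), (g.symm z : H × H) = (z.fst, z.snd) := fun z => rfl
    simp only [hgsu, aux_Ahat_apply]
    show @inner ℂ _ _ (ContinuousLinearMap.adjoint (A x) u.snd) w.fst
          + @inner ℂ _ _ ((A x) u.fst) w.snd
        = @inner ℂ _ _ u.fst (ContinuousLinearMap.adjoint (A x) w.snd)
          + @inner ℂ _ _ u.snd ((A x) w.fst)
    rw [ContinuousLinearMap.adjoint_inner_left, ContinuousLinearMap.adjoint_inner_right]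
    ring
  have hsa : ∀ x, IsSelfAdjoint (T x) := by
    intro x
    have h := (hBsa x).pow 2
    rwa [sq] at h
  -- (3) spectrum transfer
  have hspec : ∀ x (c : ℂ), c ∈ spectrum ℂ (T x) ↔ c ∈ spectrum ℂ ((Ahat (A x)) ^ 2) := by
    intro x c
    rw [hTconj x, aux_spectrum_conj g ((Ahat (A x)) ^ 2)]
  -- (4) compactness
  have hcompact : ∀ x, IsCompactOperator ((T x - 1 :
      WithLp 2 (H × H) →L[ℂ] WithLp 2 (H × H)) : WithLp 2 (H × H) → WithLp 2 (H × H)) := by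
    intro x
    have hA : IsCompactOperator (((Ahat (A x)) ^ 2 - 1 : (H × H) →L[ℂ] (H × H))
        : (H × H) → (H × H)) := aux_Ahat_sq_sub_one_compact (A x) (hcpt₁ x) (hcpt₂ x)
    have hkey : ((T x - 1 : WithLp 2 (H × H) →L[ℂ] WithLp 2 (H × H))
          : WithLp 2 (H × H) → WithLp 2 (H × H))
        = (g.toContinuousLinearMap : (H × H) → WithLp 2 (H × H))
            ∘ ((((Ahat (A x)) ^ 2 - 1 : (H × H) →L[ℂ] (H × H)) : (H × H) → (H × H))
            ∘ (g.symm.toContinuousLinearMap : WithLp 2 (H × H) → (H × H))) := by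
      funext u
      show (T x) u - u = g ((((Ahat (A x)) ^ 2) (g.symm u)) - g.symm u)
      rw [map_sub, g.apply_symm_apply]
      have h5 := ContinuousLinearMap.ext_iff.mp (hTconj x) u
      rw [h5]
      rfl
    rw [hkey]
    exact (hA.comp_clm g.symm.toContinuousLinearMap).clm_comp g.toContinuousLinearMap
  -- (5) continuity
  have hTcont : Continuous T := by
    have h1 : Continuous fun x => (Ahat (A x)).comp g.symm.toContinuousLinearMap :=
      (aux_Ahat_cont hcont).clm_comp continuous_const
    have h2 : Continuous fun x =>
        (g.toContinuousLinearMap.comp ((Ahat (A x)).comp g.symm.toContinuousLinearMap)) := by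
      have := (continuous_const (y := g.toContinuousLinearMap)).clm_comp h1
      simpa [ContinuousLinearMap.comp_assoc] using this
    have hBcont : Continuous B := by
      rw [hB]
      simpa [ContinuousLinearMap.comp_assoc] using h2
    exact hBcont.mul hBcont
  -- (6) resolvent at every point of U
  have hres' : ∀ x ∈ U, (μ : ℝ) ∉ spectrum ℝ (T x) := by
    intro x hx h
    exact hres x hx ((hspec x μ).mp ((aux_real_spec_iff (T x)).mp h))
  -- (7) choice of ε
  obtain ⟨ε₀, hε₀, hball⟩ : ∃ ε₀ > 0, Metric.ball μ ε₀ ⊆ (spectrum ℝ (T x₀))ᶜ := by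
    have hopen : IsOpen (spectrum ℝ (T x₀))ᶜ := aux_spec_real_open (T x₀)
    exact Metric.isOpen_iff.mp hopen μ (hres' x₀ hx₀)
  set ε : ℝ := min ε₀ (1 - μ) / 2 with hε_def
  have hε : 0 < ε := by
    have : 0 < min ε₀ (1 - μ) := lt_min hε₀ (by linarith)
    positivity
  have hεε₀ : 2 * ε ≤ ε₀ := by
    have := min_le_left ε₀ (1 - μ); rw [hε_def]; linarith
  have hμε1 : μ + ε ≤ 1 := by
    have := min_le_right ε₀ (1 - μ); rw [hε_def]; linarith
  have hεlt1 : ε < 1 := by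
    have := min_le_right ε₀ (1 - μ); rw [hε_def]; linarith
  have hgap₀ : ∀ ν ∈ Set.Icc μ (μ + ε), ∀ t ∈ spectrum ℝ (T x₀), ε ≤ |ν - t| := by
    rintro ν ⟨hν1, hν2⟩ t ht
    have h1 : t ∉ Metric.ball μ ε₀ := fun hmem => (hball hmem) ht
    rw [Metric.mem_ball, Real.dist_eq, not_lt] at h1
    have habs : ε₀ ≤ t - μ ∨ ε₀ ≤ μ - t := by
      rcases abs_cases (t - μ) with ⟨h2, _⟩ | ⟨h2, _⟩
      · left; linarith
      · right; linarith
    rcases abs_cases (ν - t) with ⟨h3, _⟩ | ⟨h3, _⟩ <;> rcases habs with h4 | h4 <;> linarith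
  have hgapx : ∀ x, ‖T x - T x₀‖ < ε → ∀ ν ∈ Set.Icc μ (μ + ε), ν ∉ spectrum ℝ (T x) :=
    fun x hx ν hν => aux_gap_stable (hsa x₀) hε (hgap₀ ν hν) hx
  -- (8) polynomial approximation of the bump function
  set M : ℝ := ‖T x₀‖ + 1 with hM
  set f : ℝ → ℝ := auxBump μ ε with hfdef
  obtain ⟨p, hp⟩ := exists_polynomial_near_of_continuousOn (-M) M f
    (auxBump_continuous μ ε).continuousOn (1/4) (by norm_num)
  -- (9) the neighbourhood V
  set V : Set X := (U ∩ {x | ‖T x - T x₀‖ < ε})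
      ∩ {x | ‖Polynomial.aeval (T x) p - Polynomial.aeval (T x₀) p‖ < 1/2} with hV
  have hVopen : IsOpen V := by
    have h1 : IsOpen {x : X | ‖T x - T x₀‖ < ε} :=
      isOpen_lt ((hTcont.sub continuous_const).norm) continuous_const
    have h2 : IsOpen {x : X | ‖Polynomial.aeval (T x) p - Polynomial.aeval (T x₀) p‖ < 1/2} :=
      isOpen_lt (((p.continuous_aeval.comp hTcont).sub continuous_const).norm) continuous_const
    exact (hU.inter h1).inter h2
  have hx₀V : x₀ ∈ V := by
    refine ⟨⟨hx₀, ?_⟩, ?_⟩ <;> simp [hε, sub_self]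
  have hVU : V ⊆ U := fun x hx => hx.1.1
  refine ⟨V, hVopen, hx₀V, hVU, ?_⟩
  -- (10) per-point facts
  have hspecIcc : ∀ x, ‖T x - T x₀‖ < ε → ∀ t ∈ spectrum ℝ (T x), t ∈ Set.Icc (-M) M := by
    intro x hx t ht
    have h1 : |t| ≤ ‖T x‖ := aux_spec_abs_le (T x) ht
    have h2 : ‖T x‖ - ‖T x₀‖ ≤ ‖T x - T x₀‖ := norm_sub_norm_le (T x) (T x₀)
    rw [abs_le] at h1
    constructor <;> [linarith [h1.1]; linarith [h1.2]]
  set P : X → (WithLp 2 (H × H) →L[ℂ] WithLp 2 (H × H)) := fun x => cfc f (T x) with hPdef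
  have hPa : ∀ x, ‖T x - T x₀‖ < ε → ‖P x - Polynomial.aeval (T x) p‖ ≤ 1/4 := by
    intro x hx
    rw [hPdef, ← cfc_polynomial p (T x) (hsa x),
      ← cfc_sub f p.eval (T x) (auxBump_continuous μ ε).continuousOn p.continuous.continuousOn]
    refine norm_cfc_le (by norm_num) fun t ht => ?_
    have := hp t (hspecIcc x hx t ht)
    rw [Real.norm_eq_abs, abs_sub_comm]
    exact this.le
  have hT₀self : ‖T x₀ - T x₀‖ < ε := by rw [sub_self, norm_zero]; exact hε
  -- main per-point conclusion
  intro x hxV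
  obtain ⟨⟨hxU, hxnorm'⟩, hxaeval'⟩ := hxV
  have hxnorm : ‖T x - T x₀‖ < ε := hxnorm'
  have hxaeval : ‖Polynomial.aeval (T x) p - Polynomial.aeval (T x₀) p‖ < 1/2 := hxaeval'
  -- closeness of the two projections
  have hclose : ‖P x - P x₀‖ < 1 := by
    have h1 := hPa x hxnorm
    have h2 := hPa x₀ hT₀self
    have h3 : ‖P x - P x₀‖ ≤ ‖P x - Polynomial.aeval (T x) p‖
        + ‖Polynomial.aeval (T x) p - Polynomial.aeval (T x₀) p‖
        + ‖Polynomial.aeval (T x₀) p - P x₀‖ := by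
      have t1 := norm_sub_le_norm_sub_add_norm_sub (P x) (Polynomial.aeval (T x) p) (P x₀)
      have t2 := norm_sub_le_norm_sub_add_norm_sub (Polynomial.aeval (T x) p)
        (Polynomial.aeval (T x₀) p) (P x₀)
      linarith
    rw [norm_sub_rev (Polynomial.aeval (T x₀) p)] at h3
    linarith
  -- idempotency / compactness / finite rank
  have hidem : ∀ y, ‖T y - T x₀‖ < ε → ∀ v, P y (P y v) = P y v :=
    fun y hy => aux_idem (hsa y) hε (hgapx y hy)
  have hPcomp : ∀ y, IsCompactOperator ((P y : WithLp 2 (H × H) →L[ℂ] WithLp 2 (H × H))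
      : WithLp 2 (H × H) → WithLp 2 (H × H)) :=
    fun y => aux_cfc_compact (hsa y) (hcompact y) (auxBump_continuous μ ε)
      (auxBump_eq_zero hε hμε1)
  have hfin : ∀ y, ‖T y - T x₀‖ < ε → FiniteDimensional ℂ
      (LinearMap.range ((P y : WithLp 2 (H × H) →L[ℂ] WithLp 2 (H × H))
        : WithLp 2 (H × H) →ₗ[ℂ] WithLp 2 (H × H))) :=
    fun y hy => aux_findim_range (hidem y hy) (hPcomp y)
  have hrank : Module.finrank ℂ
        (LinearMap.range ((P x : WithLp 2 (H × H) →L[ℂ] WithLp 2 (H × H))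
          : WithLp 2 (H × H) →ₗ[ℂ] WithLp 2 (H × H)))
      = Module.finrank ℂ
        (LinearMap.range ((P x₀ : WithLp 2 (H × H) →L[ℂ] WithLp 2 (H × H))
          : WithLp 2 (H × H) →ₗ[ℂ] WithLp 2 (H × H))) :=
    aux_finrank_eq (hidem x hxnorm) (hidem x₀ hT₀self) (hfin x hxnorm) (hfin x₀ hT₀self) hclose
  -- eigenspace suprema coincide with ranges
  have hEig : ∀ y, ‖T y - T x₀‖ < ε →
      (⨆ l : {l : ℝ // l < μ},
        Module.End.eigenspace ((T y : WithLp 2 (H × H) →L[ℂ] WithLp 2 (H × H))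
          : WithLp 2 (H × H) →ₗ[ℂ] WithLp 2 (H × H)) (l : ℂ))
        = LinearMap.range ((P y : WithLp 2 (H × H) →L[ℂ] WithLp 2 (H × H))
          : WithLp 2 (H × H) →ₗ[ℂ] WithLp 2 (H × H)) :=
    fun y hy => aux_eigensup_eq_range (hsa y) hε (hgapx y hy) (hfin y hy)
  -- transfer dimension from H × H to WithLp 2 (H × H)
  have hdim : ∀ y : X,
      Module.finrank ℂ
        ↥(⨆ l : {l : ℝ // l < μ},
            Module.End.eigenspace
              (((Ahat (A y)) ^ 2 : (H × H) →L[ℂ] (H × H)) : (H × H) →ₗ[ℂ] (H × H)) (l : ℂ))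
      = Module.finrank ℂ
        ↥(⨆ l : {l : ℝ // l < μ},
            Module.End.eigenspace ((T y : WithLp 2 (H × H) →L[ℂ] WithLp 2 (H × H))
              : WithLp 2 (H × H) →ₗ[ℂ] WithLp 2 (H × H)) (l : ℂ)) := by
    intro y
    have hmap : ∀ l : {l : ℝ // l < μ},
        (Module.End.eigenspace (((Ahat (A y)) ^ 2 : (H × H) →L[ℂ] (H × H))
          : (H × H) →ₗ[ℂ] (H × H)) (l : ℂ)).map (g.toLinearEquiv : (H × H) →ₗ[ℂ] WithLp 2 (H × H))
        = Module.End.eigenspace ((T y : WithLp 2 (H × H) →L[ℂ] WithLp 2 (H × H))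
            : WithLp 2 (H × H) →ₗ[ℂ] WithLp 2 (H × H)) (l : ℂ) := by
      intro l
      rw [hTconj y]
      exact aux_eig_conj g ((Ahat (A y)) ^ 2) (l : ℂ)
    rw [← iSup_congr hmap, ← Submodule.map_iSup]
    exact (LinearEquiv.finrank_map_eq g.toLinearEquiv _).symm
  rw [hdim x, hdim x₀, hEig x hxnorm, hEig x₀ hT₀self, hrank]
end
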